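/- arXiv:1610.01461 — 4 statements merged into one kernel-verified Lean document; each statement's English description precedes it below -/
import Mathlib

section
/- Let a_{ij} ≥ 0 (i,j ∈ {1,…,n}) with a_{ii} = 0, let L ∈ ℝ^{n×n} be the Laplacian matrix defined by l_{ii} = Σ_{j=1}^n a_{ij} and l_{ij} = −a_{ij} for i ≠ j, let 0 < m < n, and suppose a_{ij} = 0 for all i ∈ {m+1,…,n} and all j (so the last n−m rows of L vanish and L = [[L₁, L₂],[0, 0]] with L₁ ∈ ℝ^{m×m}, L₂ ∈ ℝ^{m×(n−m)}). Suppose that for every i ∈ {1,…,m} there exist j ∈ {m+1,…,n} and a finite sequence of indices j = l_0, l_1, …, l_k = i with a_{l_{r+1} l_r} > 0 for all r (a directed path from j to i). Then L₁ is a nonsingular M-matrix; in particular L₁ is invertible, its off-diagonal entries are nonpositive, and every eigenvalue of L₁ has positive real part. -/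
open scoped Matrix

/-- Auxiliary maximum-principle lemma: every solution of `L₁ *ᵥ v = 0` is nonpositive. -/
lemma laplacian_aux (n m : ℕ) (hm : 0 < m) (hmn : m < n)
    (a : Fin n → Fin n → ℝ)
    (ha_nonneg : ∀ i j, 0 ≤ a i j)
    (ha_diag : ∀ i, a i i = 0)
    (ha_leader : ∀ i : Fin n, m ≤ (i : ℕ) → ∀ j, a i j = 0)
    (L : Matrix (Fin n) (Fin n) ℝ)
    (hL : ∀ i j, L i j = if i = j then ∑ k, a i k else -a i j)
    (L₁ : Matrix (Fin m) (Fin m) ℝ)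
    (hL₁ : ∀ i j, L₁ i j = L (Fin.castLE hmn.le i) (Fin.castLE hmn.le j))
    (hpath : ∀ i : Fin n, (i : ℕ) < m → ∃ j : Fin n, m ≤ (j : ℕ) ∧
      ∃ (k : ℕ) (l : ℕ → Fin n), l 0 = j ∧ l k = i ∧
        ∀ r : ℕ, r < k → 0 < a (l (r + 1)) (l r))
    (v : Fin m → ℝ) (hv : L₁.mulVec v = 0) :
    ∀ i, v i ≤ 0 := by
  have hn : 0 < n := hm.trans hmn
  -- extend v by zero
  set y : Fin n → ℝ := fun j => if h : (j : ℕ) < m then v ⟨(j : ℕ), h⟩ else 0 with hy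
  have hyz : ∀ j : Fin n, m ≤ (j : ℕ) → y j = 0 := by
    intro j hj; simp [hy, Nat.not_lt.mpr hj]
  have hyv : ∀ i : Fin m, y (Fin.castLE hmn.le i) = v i := by
    intro i; simp [hy, i.isLt]
  -- sum conversion
  have hsum : ∀ f : Fin n → ℝ, (∀ j : Fin n, m ≤ (j : ℕ) → f j = 0) →
      ∑ j : Fin n, f j = ∑ j : Fin m, f (Fin.castLE hmn.le j) := by
    intro f hf
    have hmap := Finset.sum_map Finset.univ ⟨Fin.castLE hmn.le, Fin.castLE_injective hmn.le⟩ f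
    simp only [Function.Embedding.coeFn_mk] at hmap
    rw [← hmap]
    apply (Finset.sum_subset (Finset.subset_univ _) _).symm
    intro x _ hx
    apply hf
    by_contra h
    push_neg at h
    exact hx (Finset.mem_map.mpr ⟨⟨(x : ℕ), h⟩, Finset.mem_univ _, by
      simp [Fin.ext_iff]⟩)
  -- row equation
  have hrow : ∀ i : Fin n, (i : ℕ) < m → ∑ j : Fin n, a i j * (y i - y j) = 0 := by
    intro i hi
    set i' : Fin m := ⟨(i : ℕ), hi⟩ with hi'
    have hci : Fin.castLE hmn.le i' = i := by simp [hi', Fin.ext_iff]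
    have h0 : ∑ j : Fin m, L₁ i' j * v j = 0 := congrFun hv i'
    have hterm : ∀ j : Fin m, L₁ i' j * v j =
        (if i' = j then (∑ k, a i k) * v j else 0) - a i (Fin.castLE hmn.le j) * v j := by
      intro j
      by_cases h : i' = j
      · subst h
        have e1 : L₁ i' i' = ∑ k, a i k := by rw [hL₁, hL, if_pos rfl, hci]
        have e2 : a i (Fin.castLE hmn.le i') = 0 := by rw [hci]; exact ha_diag i
        rw [e1, e2, if_pos rfl]
        ring
      · have hne : Fin.castLE hmn.le i' ≠ Fin.castLE hmn.le j :=
          fun hc => h (Fin.castLE_injective hmn.le hc)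
        have e1 : L₁ i' j = -a i (Fin.castLE hmn.le j) := by
          rw [hL₁, hL, if_neg hne, hci]
        rw [e1, if_neg h]
        ring
    rw [Finset.sum_congr rfl (fun j _ => hterm j)] at h0
    rw [Finset.sum_sub_distrib, Finset.sum_ite_eq (Finset.univ) i'
      (fun j => (∑ k, a i k) * v j)] at h0
    simp only [Finset.mem_univ, if_true] at h0
    have h1 : ∑ j : Fin m, a i (Fin.castLE hmn.le j) * v j = ∑ j : Fin n, a i j * y j := by
      rw [hsum (fun j => a i j * y j) (fun j hj => by show a i j * y j = 0; rw [hyz j hj, mul_zero])]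
      exact Finset.sum_congr rfl fun j _ => by rw [hyv]
    rw [h1] at h0
    have h2 : ∑ j : Fin n, a i j * (y i - y j)
        = (∑ k, a i k) * y i - ∑ j : Fin n, a i j * y j := by
      rw [Finset.sum_mul]
      rw [← Finset.sum_sub_distrib]
      exact Finset.sum_congr rfl fun j _ => by ring
    have hyi : y i = v i' := by rw [← hci]; exact hyv i'
    rw [h2, hyi]
    exact h0
  -- the maximum
  have hne : (Finset.univ : Finset (Fin n)).Nonempty := ⟨⟨0, hn⟩, Finset.mem_univ _⟩
  obtain ⟨i₀, -, hi₀⟩ := Finset.exists_mem_eq_sup' hne y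
  set M := Finset.univ.sup' hne y with hMdef
  have hle : ∀ j, y j ≤ M := fun j => Finset.le_sup' y (Finset.mem_univ j)
  have hM0 : M ≤ 0 := by
    by_contra hMpos
    push_neg at hMpos
    -- propagation
    have prop : ∀ i : Fin n, y i = M → ∀ j, 0 < a i j → y j = M := by
      intro i hiM j haij
      have him : (i : ℕ) < m := by
        by_contra h
        push_neg at h
        rw [hyz i h] at hiM
        exact absurd hiM.symm (ne_of_gt hMpos)
      have h0 := hrow i him
      have hnn : ∀ t ∈ Finset.univ, 0 ≤ a i t * (y i - y t) := by
        intro t _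
        exact mul_nonneg (ha_nonneg i t) (by rw [hiM]; linarith [hle t])
      have := (Finset.sum_eq_zero_iff_of_nonneg hnn).mp h0 j (Finset.mem_univ j)
      rcases mul_eq_zero.mp this with h | h
      · exact absurd h (ne_of_gt haij)
      · rw [hiM] at h; linarith [sub_eq_zero.mp h]
    have hi₀m : (i₀ : ℕ) < m := by
      by_contra h
      push_neg at h
      rw [hyz i₀ h] at hi₀
      exact absurd hi₀ (ne_of_gt hMpos)
    obtain ⟨j, hjm, k, l, hl0, hlk, hedge⟩ := hpath i₀ hi₀m
    have hchain : ∀ r : ℕ, r ≤ k → y (l (k - r)) = M := by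
      intro r
      induction r with
      | zero => intro _; simpa [hlk] using hi₀.symm
      | succ r ih =>
        intro hrk
        have hr : r ≤ k := Nat.le_of_succ_le hrk
        have hprev := ih hr
        have hstep : k - r = (k - (r + 1)) + 1 := by omega
        have hedge' : 0 < a (l ((k - (r+1)) + 1)) (l (k - (r+1))) := by
          apply hedge
          omega
        rw [hstep] at hprev
        exact prop _ hprev _ hedge'
    have := hchain k le_rfl
    simp only [Nat.sub_self, hl0] at this
    rw [hyz j hjm] at this
    exact absurd this.symm (ne_of_gt hMpos)
  intro i
  calc v i = y (Fin.castLE hmn.le i) := (hyv i).symm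
    _ ≤ M := hle _
    _ ≤ 0 := hM0

/-- Lemma 1 of the paper: under the leader-follower structure and the
directed-path connectivity assumption, the upper-left block `L₁` of the Laplacian is a
nonsingular M-matrix: it is invertible, has nonpositive off-diagonal entries, and all its
eigenvalues have positive real part. -/
theorem laplacian_block_nonsingular_Mmatrix (n m : ℕ) (hm : 0 < m) (hmn : m < n)
    (a : Fin n → Fin n → ℝ)
    (ha_nonneg : ∀ i j, 0 ≤ a i j)
    (ha_diag : ∀ i, a i i = 0)
    (ha_leader : ∀ i : Fin n, m ≤ (i : ℕ) → ∀ j, a i j = 0)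
    (L : Matrix (Fin n) (Fin n) ℝ)
    (hL : ∀ i j, L i j = if i = j then ∑ k, a i k else -a i j)
    (L₁ : Matrix (Fin m) (Fin m) ℝ)
    (hL₁ : ∀ i j, L₁ i j = L (Fin.castLE hmn.le i) (Fin.castLE hmn.le j))
    (hpath : ∀ i : Fin n, (i : ℕ) < m → ∃ j : Fin n, m ≤ (j : ℕ) ∧
      ∃ (k : ℕ) (l : ℕ → Fin n), l 0 = j ∧ l k = i ∧
        ∀ r : ℕ, r < k → 0 < a (l (r + 1)) (l r)) :
    IsUnit L₁ ∧ (∀ i j : Fin m, i ≠ j → L₁ i j ≤ 0) ∧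
      (∀ μ ∈ spectrum ℂ (L₁.map (fun x : ℝ => (x : ℂ))), 0 < μ.re) := by

  -- injectivity of mulVec
  have hker : ∀ v : Fin m → ℝ, L₁.mulVec v = 0 → v = 0 := by
    intro v hv
    have h1 := laplacian_aux n m hm hmn a ha_nonneg ha_diag ha_leader L hL L₁ hL₁ hpath v hv
    have hv' : L₁.mulVec (-v) = 0 := by rw [Matrix.mulVec_neg, hv, neg_zero]
    have h2 := laplacian_aux n m hm hmn a ha_nonneg ha_diag ha_leader L hL L₁ hL₁ hpath (-v) hv'
    funext i
    have := h2 i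
    simp only [Pi.neg_apply, neg_nonpos] at this
    exact le_antisymm (h1 i) (by simpa using this)
  have hdet : L₁.det ≠ 0 := by
    intro hdet
    obtain ⟨v, hvne, hv⟩ := (Matrix.exists_mulVec_eq_zero_iff).mpr hdet
    exact hvne (hker v hv)
  have hunit : IsUnit L₁ := (Matrix.isUnit_iff_isUnit_det L₁).mpr (isUnit_iff_ne_zero.mpr hdet)
  refine ⟨hunit, ?_, ?_⟩
  · -- off-diagonal nonpositivity
    intro i j hij
    have hne : Fin.castLE hmn.le i ≠ Fin.castLE hmn.le j :=
      fun hc => hij (Fin.castLE_injective hmn.le hc)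
    rw [hL₁, hL, if_neg hne]
    simpa using ha_nonneg _ _
  · -- eigenvalues
    intro μ hμ
    set A : Matrix (Fin m) (Fin m) ℂ := L₁.map (fun x : ℝ => (x : ℂ)) with hA
    have hAunit : IsUnit A := by
      have := hunit.map ((algebraMap ℝ ℂ).mapMatrix : Matrix (Fin m) (Fin m) ℝ →+* _)
      convert this using 2
      rfl
    -- get eigenvalue
    have heig : Module.End.HasEigenvalue (Matrix.toLin' A) μ := by
      rw [Module.End.hasEigenvalue_iff_mem_spectrum]
      have : Matrix.toLin' A = Matrix.toLinAlgEquiv' A := by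
        ext v
        rfl
      rw [this, AlgEquiv.spectrum_eq Matrix.toLinAlgEquiv' A]
      exact hμ
    obtain ⟨k, hk⟩ := eigenvalue_mem_ball heig
    -- translate the Gershgorin data
    set c : ℝ := ∑ t : Fin n, a (Fin.castLE hmn.le k) t with hc
    have hc0 : 0 ≤ c := Finset.sum_nonneg fun t _ => ha_nonneg _ t
    have hAkk : A k k = (c : ℂ) := by
      rw [hA, Matrix.map_apply, hL₁, hL, if_pos rfl]
    set r : ℝ := ∑ j ∈ Finset.univ.erase k, ‖A k j‖ with hr
    have hrc : r ≤ c := by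
      have hterm : ∀ j ∈ Finset.univ.erase k, ‖A k j‖ = a (Fin.castLE hmn.le k) (Fin.castLE hmn.le j) := by
        intro j hj
        have hjk : j ≠ k := (Finset.mem_erase.mp hj).1
        have hne : Fin.castLE hmn.le k ≠ Fin.castLE hmn.le j :=
          fun hc' => hjk.symm (Fin.castLE_injective hmn.le hc')
        rw [hA, Matrix.map_apply, hL₁, hL, if_neg hne]
        rw [Complex.norm_real, norm_neg, Real.norm_eq_abs, abs_of_nonneg (ha_nonneg _ _)]
      rw [hr, Finset.sum_congr rfl hterm]
      -- sum over erase k mapped into Fin n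
      have hmap := Finset.sum_map (Finset.univ.erase k)
        ⟨Fin.castLE hmn.le, Fin.castLE_injective hmn.le⟩ (fun t => a (Fin.castLE hmn.le k) t)
      simp only [Function.Embedding.coeFn_mk] at hmap
      rw [← hmap, hc]
      exact Finset.sum_le_sum_of_subset_of_nonneg (Finset.subset_univ _)
        (fun t _ _ => ha_nonneg _ t)
    -- Gershgorin inequality
    have hdist : ‖μ - (c : ℂ)‖ ≤ r := by
      rw [← hAkk]
      simpa [Complex.dist_eq] using Metric.mem_closedBall.mp hk
    by_contra hre
    push_neg at hre
    have hsq : (μ.re - c) ^ 2 + μ.im ^ 2 ≤ r ^ 2 := by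
      have h1 : ‖μ - (c : ℂ)‖ ^ 2 ≤ r ^ 2 := by
        have : (0 : ℝ) ≤ ‖μ - (c : ℂ)‖ := norm_nonneg _
        nlinarith
      rw [Complex.sq_norm, Complex.normSq_apply] at h1
      simp only [Complex.sub_re, Complex.sub_im, Complex.ofReal_re, Complex.ofReal_im,
        sub_zero] at h1
      nlinarith [h1]
    have hr0 : (0:ℝ) ≤ r := Finset.sum_nonneg fun j _ => norm_nonneg _
    have hkey : μ.re ^ 2 - 2 * μ.re * c + μ.im ^ 2 ≤ 0 := by nlinarith [hsq, hrc, hr0, hc0]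
    have hmul : μ.re * c ≤ 0 := mul_nonpos_of_nonpos_of_nonneg hre hc0
    have him2 : μ.im ^ 2 = 0 := le_antisymm (by nlinarith [sq_nonneg μ.re]) (sq_nonneg _)
    have hre2 : μ.re ^ 2 = 0 := le_antisymm (by nlinarith [sq_nonneg μ.im]) (sq_nonneg _)
    have him : μ.im = 0 := by
      have := sq_eq_zero_iff.mp him2
      exact this
    have hre0 : μ.re = 0 := sq_eq_zero_iff.mp hre2
    have hμ0 : μ = 0 := Complex.ext hre0 him
    rw [hμ0] at hμ
    exact (spectrum.zero_mem_iff ℂ).mp hμ hAunit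
end

section
/- Let a_{ij} ≥ 0 (i,j ∈ {1,…,n}) with a_{ii} = 0, let L ∈ ℝ^{n×n} be the Laplacian matrix defined by l_{ii} = Σ_{j=1}^n a_{ij} and l_{ij} = −a_{ij} for i ≠ j, let 0 < m < n, and suppose a_{ij} = 0 for all i ∈ {m+1,…,n} and all j (so L = [[L₁, L₂],[0, 0]] with L₁ ∈ ℝ^{m×m}, L₂ ∈ ℝ^{m×(n−m)}). Suppose that for every i ∈ {1,…,m} there exist j ∈ {m+1,…,n} and a finite sequence of indices j = l_0, l_1, …, l_k = i with a_{l_{r+1} l_r} > 0 for all r. Then every entry of −L₁^{-1} L₂ is nonnegative and every row sum of −L₁^{-1} L₂ equals one. -/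
open scoped Matrix

lemma laplacian_sum_split {n m : ℕ} (hmn : m ≤ n) (f : Fin n → ℝ) :
    ∑ k, f k = (∑ j : Fin m, f (Fin.castLE hmn j)) +
      ∑ j : Fin (n - m), f ⟨m + (j : ℕ), by omega⟩ := by
  have h : m + (n - m) = n := by omega
  rw [← Fintype.sum_equiv (finSumFinEquiv.trans (finCongr h))
    (fun p => f ((finSumFinEquiv.trans (finCongr h)) p)) f (fun p => rfl)]
  rw [Fintype.sum_sum_type]
  congr 1

lemma laplacian_mulVec_eq (n m : ℕ) (hmn : m < n)
    (a : Fin n → Fin n → ℝ)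
    (ha_diag : ∀ i, a i i = 0)
    (L : Matrix (Fin n) (Fin n) ℝ)
    (hL : ∀ i j, L i j = if i = j then ∑ k, a i k else -a i j)
    (L₁ : Matrix (Fin m) (Fin m) ℝ)
    (hL₁ : ∀ i j, L₁ i j = L (Fin.castLE hmn.le i) (Fin.castLE hmn.le j))
    (x : Fin m → ℝ) (i : Fin m) :
    (L₁ *ᵥ x) i =
      (∑ j : Fin m, a (Fin.castLE hmn.le i) (Fin.castLE hmn.le j) * (x i - x j)) +
      (∑ j : Fin (n - m), a (Fin.castLE hmn.le i) ⟨m + (j : ℕ), by omega⟩) * x i := by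
  set e : Fin m → Fin n := Fin.castLE hmn.le with he
  have hinj : ∀ i j : Fin m, e i = e j ↔ i = j :=
    fun i j => ⟨fun h => Fin.castLE_injective hmn.le h, fun h => by rw [h]⟩
  have h1 : ∀ j : Fin m, L₁ i j * x j =
      (if i = j then (∑ k, a (e i) k) * x i else 0) + (-(a (e i) (e j) * x j)) := by
    intro j
    rw [hL₁, hL]
    by_cases h : i = j
    · subst h; simp [ha_diag, he]
    · rw [if_neg (fun hc => h ((hinj i j).mp hc)), if_neg h]; ring
  have h2 : (L₁ *ᵥ x) i = ∑ j : Fin m, L₁ i j * x j := rfl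
  rw [h2, Finset.sum_congr rfl fun j _ => h1 j, Finset.sum_add_distrib,
    Finset.sum_ite_eq, if_pos (Finset.mem_univ i)]
  rw [laplacian_sum_split hmn.le (fun k => a (e i) k)]
  rw [Finset.sum_congr rfl (fun j _ => mul_sub (a (e i) (e j)) (x i) (x j)),
    Finset.sum_sub_distrib, Finset.sum_neg_distrib, add_mul, Finset.sum_mul]
  ring

lemma laplacian_mono (n m : ℕ) (hm : 0 < m) (hmn : m < n)
    (a : Fin n → Fin n → ℝ)
    (ha_nonneg : ∀ i j, 0 ≤ a i j)
    (ha_diag : ∀ i, a i i = 0)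
    (L : Matrix (Fin n) (Fin n) ℝ)
    (hL : ∀ i j, L i j = if i = j then ∑ k, a i k else -a i j)
    (L₁ : Matrix (Fin m) (Fin m) ℝ)
    (hL₁ : ∀ i j, L₁ i j = L (Fin.castLE hmn.le i) (Fin.castLE hmn.le j))
    (hpath : ∀ i : Fin n, (i : ℕ) < m → ∃ j : Fin n, m ≤ (j : ℕ) ∧
      ∃ (k : ℕ) (l : ℕ → Fin n), l 0 = j ∧ l k = i ∧
        ∀ r : ℕ, r < k → 0 < a (l (r + 1)) (l r))
    (x : Fin m → ℝ) (hx : ∀ i, 0 ≤ (L₁ *ᵥ x) i) : ∀ i, 0 ≤ x i := by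
  by_contra hcon
  push_neg at hcon
  obtain ⟨iw, hiw⟩ := hcon
  obtain ⟨i₀, -, hmin⟩ := Finset.exists_min_image Finset.univ x ⟨iw, Finset.mem_univ iw⟩
  set e : Fin m → Fin n := Fin.castLE hmn.le with he
  set c : ℝ := x i₀ with hcdef
  have hc : c < 0 := lt_of_le_of_lt (hmin iw (Finset.mem_univ iw)) hiw
  have key : ∀ i : Fin m, x i = c →
      (∀ j : Fin (n - m), a (e i) ⟨m + (j : ℕ), by omega⟩ = 0) ∧
      (∀ j : Fin m, 0 < a (e i) (e j) → x j = c) := by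
    intro i hi
    have h := hx i
    rw [laplacian_mulVec_eq n m hmn a ha_diag L hL L₁ hL₁ x i] at h
    have ht1 : ∀ j : Fin m, a (e i) (e j) * (x i - x j) ≤ 0 := by
      intro j
      apply mul_nonpos_of_nonneg_of_nonpos (ha_nonneg _ _)
      have := hmin j (Finset.mem_univ j)
      rw [hi]; linarith
    have hs1 : (∑ j : Fin m, a (e i) (e j) * (x i - x j)) ≤ 0 :=
      Finset.sum_nonpos fun j _ => ht1 j
    have hs2nn : 0 ≤ ∑ j : Fin (n - m), a (e i) ⟨m + (j : ℕ), by omega⟩ :=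
      Finset.sum_nonneg fun j _ => ha_nonneg _ _
    have hs2 : (∑ j : Fin (n - m), a (e i) ⟨m + (j : ℕ), by omega⟩) * x i ≤ 0 := by
      apply mul_nonpos_of_nonneg_of_nonpos hs2nn
      rw [hi]; linarith
    have hz1 : (∑ j : Fin m, a (e i) (e j) * (x i - x j)) = 0 := by linarith
    have hz2 : (∑ j : Fin (n - m), a (e i) ⟨m + (j : ℕ), by omega⟩) * x i = 0 := by
      linarith
    constructor
    · intro j
      have hsum0 : (∑ j : Fin (n - m), a (e i) ⟨m + (j : ℕ), by omega⟩) = 0 := by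
        rcases mul_eq_zero.mp hz2 with h' | h'
        · exact h'
        · rw [hi] at h'; exact absurd h' (ne_of_lt hc)
      have := (Finset.sum_eq_zero_iff_of_nonneg (s := (Finset.univ : Finset (Fin (n - m))))
        (f := fun j : Fin (n - m) => a (e i) ⟨m + (j : ℕ), by omega⟩)
        (fun j _ => ha_nonneg _ _)).mp hsum0
      exact this j (Finset.mem_univ j)
    · intro j hj
      have := (Finset.sum_eq_zero_iff_of_nonpos (fun j _ => ht1 j)).mp hz1 j (Finset.mem_univ j)
      rcases mul_eq_zero.mp this with h' | h'
      · exact absurd h' (ne_of_gt hj)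
      · rw [hi] at h'; linarith
  have hi₀lt : ((e i₀ : Fin n) : ℕ) < m := i₀.isLt
  obtain ⟨j, hjm, k, l, hl0, hlk, hstep⟩ := hpath (e i₀) hi₀lt
  have claim : ∀ s, s ≤ k → ∃ h : (l (k - s) : ℕ) < m, x ⟨(l (k - s) : ℕ), h⟩ = c := by
    intro s
    induction s with
    | zero =>
      intro _
      have hv : ((l (k - 0) : Fin n) : ℕ) < m := by rw [Nat.sub_zero, hlk]; exact i₀.isLt
      refine ⟨hv, ?_⟩
      have : (⟨((l (k - 0) : Fin n) : ℕ), hv⟩ : Fin m) = i₀ := by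
        apply Fin.ext; simp [hlk, he]
      rw [this]
    | succ s ih =>
      intro hsk
      obtain ⟨hlt, hxc⟩ := ih (by omega)
      set i' : Fin m := ⟨(l (k - s) : ℕ), hlt⟩ with hi'
      have hei' : e i' = l (k - s) := Fin.ext rfl
      have harith : k - (s + 1) + 1 = k - s := by omega
      have hpos : 0 < a (l (k - s)) (l (k - (s + 1))) := by
        have := hstep (k - (s + 1)) (by omega)
        rwa [harith] at this
      by_cases hlo : ((l (k - (s + 1)) : Fin n) : ℕ) < m
      · refine ⟨hlo, ?_⟩
        have hej : e (⟨(l (k - (s + 1)) : ℕ), hlo⟩ : Fin m) = l (k - (s + 1)) := Fin.ext rfl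
        exact (key i' hxc).2 ⟨(l (k - (s + 1)) : ℕ), hlo⟩ (by rwa [hei', hej])
      · push_neg at hlo
        exfalso
        have hjlt : ((l (k - (s + 1)) : Fin n) : ℕ) - m < n - m := by
          have := (l (k - (s + 1))).isLt; omega
        have heq : (⟨m + ((l (k - (s + 1)) : ℕ) - m), by omega⟩ : Fin n) = l (k - (s + 1)) := by
          apply Fin.ext; simp; omega
        have := (key i' hxc).1 ⟨(l (k - (s + 1)) : ℕ) - m, hjlt⟩
        rw [heq] at this
        rw [hei'] at this
        exact absurd this (ne_of_gt hpos)
  obtain ⟨hfin, -⟩ := claim k (le_refl k)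
  rw [Nat.sub_self, hl0] at hfin
  omega

/-- Lemma 1 of the paper, second part: under the leader-follower structure and
the directed-path connectivity assumption, every entry of `-L₁⁻¹ L₂` is nonnegative and every
row sum of `-L₁⁻¹ L₂` equals one. -/
theorem laplacian_block_row_stochastic (n m : ℕ) (hm : 0 < m) (hmn : m < n)
    (a : Fin n → Fin n → ℝ)
    (ha_nonneg : ∀ i j, 0 ≤ a i j)
    (ha_diag : ∀ i, a i i = 0)
    (ha_leader : ∀ i : Fin n, m ≤ (i : ℕ) → ∀ j, a i j = 0)
    (L : Matrix (Fin n) (Fin n) ℝ)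
    (hL : ∀ i j, L i j = if i = j then ∑ k, a i k else -a i j)
    (L₁ : Matrix (Fin m) (Fin m) ℝ)
    (hL₁ : ∀ i j, L₁ i j = L (Fin.castLE hmn.le i) (Fin.castLE hmn.le j))
    (L₂ : Matrix (Fin m) (Fin (n - m)) ℝ)
    (hL₂ : ∀ (i : Fin m) (j : Fin (n - m)),
      L₂ i j = L (Fin.castLE hmn.le i) ⟨m + (j : ℕ), by have := j.isLt; omega⟩)
    (hpath : ∀ i : Fin n, (i : ℕ) < m → ∃ j : Fin n, m ≤ (j : ℕ) ∧
      ∃ (k : ℕ) (l : ℕ → Fin n), l 0 = j ∧ l k = i ∧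
        ∀ r : ℕ, r < k → 0 < a (l (r + 1)) (l r)) :
    (∀ (i : Fin m) (j : Fin (n - m)), 0 ≤ (-(L₁⁻¹ * L₂)) i j) ∧
      (∀ i : Fin m, ∑ j : Fin (n - m), (-(L₁⁻¹ * L₂)) i j = 1) := by
  set e : Fin m → Fin n := Fin.castLE hmn.le with he
  have hmono := laplacian_mono n m hm hmn a ha_nonneg ha_diag L hL L₁ hL₁ hpath
  -- L₂ entries are -a ...
  have hL₂' : ∀ (i : Fin m) (j : Fin (n - m)),
      L₂ i j = -a (e i) ⟨m + (j : ℕ), by have := j.isLt; omega⟩ := by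
    intro i j
    rw [hL₂, hL, if_neg]
    intro hcon
    have : (i : ℕ) = m + (j : ℕ) := congrArg Fin.val hcon
    have := i.isLt
    omega
  -- invertibility
  have hinj : Function.Injective (L₁.mulVec) := by
    intro u v huv
    have h1 : ∀ i, 0 ≤ (L₁ *ᵥ (u - v)) i := by
      intro i
      rw [Matrix.mulVec_sub, huv]
      simp
    have h2 : ∀ i, 0 ≤ (L₁ *ᵥ (v - u)) i := by
      intro i
      rw [Matrix.mulVec_sub, huv]
      simp
    have h3 := hmono (u - v) h1
    have h4 := hmono (v - u) h2
    funext i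
    have := h3 i
    have := h4 i
    simp only [Pi.sub_apply] at *
    linarith
  have hunit : IsUnit L₁ := Matrix.mulVec_injective_iff_isUnit.mp hinj
  have hdet : IsUnit L₁.det := (Matrix.isUnit_iff_isUnit_det L₁).mp hunit
  have hIM : L₁⁻¹ * L₁ = 1 := Matrix.nonsing_inv_mul L₁ hdet
  have hMI : L₁ * L₁⁻¹ = 1 := Matrix.mul_nonsing_inv L₁ hdet
  -- nonnegativity of L₁⁻¹ entries
  have hinv_nonneg : ∀ i j, 0 ≤ L₁⁻¹ i j := by
    intro i j
    have hx : ∀ i', 0 ≤ (L₁ *ᵥ (L₁⁻¹ *ᵥ Pi.single j 1)) i' := by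
      intro i'
      rw [Matrix.mulVec_mulVec, hMI, Matrix.one_mulVec]
      by_cases h : i' = j
      · subst h; simp
      · simp [Pi.single_apply, h]
    have := hmono _ hx j |>.trans (le_refl _)
    have h := hmono _ hx i
    simpa using h
  constructor
  · intro i j
    have : (-(L₁⁻¹ * L₂)) i j = ∑ k, L₁⁻¹ i k * (-(L₂ k j)) := by
      rw [Matrix.neg_apply, Matrix.mul_apply, ← Finset.sum_neg_distrib]
      exact Finset.sum_congr rfl fun k _ => by ring
    rw [this]
    apply Finset.sum_nonneg
    intro k _
    apply mul_nonneg (hinv_nonneg i k)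
    rw [hL₂' k j]
    simpa using ha_nonneg _ _
  · intro i
    have hrow : ∑ j : Fin (n - m), (-(L₁⁻¹ * L₂)) i j = ((-(L₁⁻¹ * L₂)) *ᵥ fun _ => (1:ℝ)) i := by
      simp [Matrix.mulVec, dotProduct]
    have hones : (-L₂) *ᵥ (fun _ => (1:ℝ)) = L₁ *ᵥ (fun _ => (1:ℝ)) := by
      funext k
      rw [laplacian_mulVec_eq n m hmn a ha_diag L hL L₁ hL₁]
      have hmv : ((-L₂) *ᵥ fun _ => (1:ℝ)) k = ∑ j : Fin (n - m),
          a (e k) ⟨m + (j : ℕ), by have := j.isLt; omega⟩ := by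
        simp only [Matrix.mulVec, dotProduct, Matrix.neg_apply, mul_one]
        exact Finset.sum_congr rfl fun j _ => by rw [hL₂' k j]; ring
      rw [hmv]
      simp
      rfl
    calc ∑ j : Fin (n - m), (-(L₁⁻¹ * L₂)) i j
        = ((-(L₁⁻¹ * L₂)) *ᵥ fun _ => (1:ℝ)) i := hrow
      _ = ((L₁⁻¹ * (-L₂)) *ᵥ fun _ => (1:ℝ)) i := by rw [Matrix.mul_neg]
      _ = (L₁⁻¹ *ᵥ ((-L₂) *ᵥ fun _ => (1:ℝ))) i := by rw [Matrix.mulVec_mulVec]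
      _ = (L₁⁻¹ *ᵥ (L₁ *ᵥ fun _ => (1:ℝ))) i := by rw [hones]
      _ = ((L₁⁻¹ * L₁) *ᵥ fun _ => (1:ℝ)) i := by rw [Matrix.mulVec_mulVec]
      _ = 1 := by rw [hIM, Matrix.one_mulVec]
end

section
/- Let A, B, E, S, C_e, D_e, F_e, Π, Γ, K be real matrices of compatible dimensions satisfying the regulator equations Π S = A Π + B Γ + E and 0 = C_e Π + D_e Γ + F_e. Let x, x̂, υ, υ̂, η be differentiable vector-valued functions on [0,∞) with υ'(t) = S υ(t), x'(t) = A x(t) + B u(t) + E υ(t), and υ̂'(t) = S υ̂(t) + η(t), where u(t) = K(x̂(t) − Π υ̂(t)) + Γ υ̂(t). Define ε = x − Π υ̂, x̃ = x̂ − x, υ̃ = υ̂ − υ, and e(t) = C_e x(t) + D_e u(t) + F_e υ(t). Then for all t ≥ 0: (i) e = (C_e + D_e K) ε + D_e K x̃ − F_e υ̃, and (ii) ε'(t) = (A + B K) ε(t) + B K x̃(t) − E υ̃(t) − Π η(t). -/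
open scoped Matrix

/-- under the regulator equations, the regulated error and the tracking
error `ε = x - Π υ̂` satisfy the closed-loop identities (13) and (14) of the paper. -/
theorem regulator_error_identities
    {Nx Nu q pe : ℕ}
    (A : Matrix (Fin Nx) (Fin Nx) ℝ) (B : Matrix (Fin Nx) (Fin Nu) ℝ)
    (E : Matrix (Fin Nx) (Fin q) ℝ) (S : Matrix (Fin q) (Fin q) ℝ)
    (Ce : Matrix (Fin pe) (Fin Nx) ℝ) (De : Matrix (Fin pe) (Fin Nu) ℝ)
    (Fe : Matrix (Fin pe) (Fin q) ℝ)
    (Pmat : Matrix (Fin Nx) (Fin q) ℝ) (Γ : Matrix (Fin Nu) (Fin q) ℝ)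
    (K : Matrix (Fin Nu) (Fin Nx) ℝ)
    (hreg1 : Pmat * S = A * Pmat + B * Γ + E)
    (hreg2 : 0 = Ce * Pmat + De * Γ + Fe)
    (x xh : ℝ → Fin Nx → ℝ) (υ υh η : ℝ → Fin q → ℝ) (u : ℝ → Fin Nu → ℝ)
    (hu : ∀ t : ℝ, u t = K.mulVec (xh t - Pmat.mulVec (υh t)) + Γ.mulVec (υh t))
    (hυ : ∀ t : ℝ, 0 ≤ t → HasDerivAt υ (S.mulVec (υ t)) t)
    (hx : ∀ t : ℝ, 0 ≤ t →
      HasDerivAt x (A.mulVec (x t) + B.mulVec (u t) + E.mulVec (υ t)) t)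
    (hυh : ∀ t : ℝ, 0 ≤ t → HasDerivAt υh (S.mulVec (υh t) + η t) t) :
    (∀ t : ℝ, 0 ≤ t →
      Ce.mulVec (x t) + De.mulVec (u t) + Fe.mulVec (υ t) =
        (Ce + De * K).mulVec (x t - Pmat.mulVec (υh t)) +
          (De * K).mulVec (xh t - x t) - Fe.mulVec (υh t - υ t)) ∧
    (∀ t : ℝ, 0 ≤ t →
      HasDerivAt (fun τ => x τ - Pmat.mulVec (υh τ))
        ((A + B * K).mulVec (x t - Pmat.mulVec (υh t)) + (B * K).mulVec (xh t - x t)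
          - E.mulVec (υh t - υ t) - Pmat.mulVec (η t)) t) := by
  have key : ∀ v : Fin q → ℝ, Pmat.mulVec (S.mulVec v) =
      A.mulVec (Pmat.mulVec v) + B.mulVec (Γ.mulVec v) + E.mulVec v := by
    intro v
    rw [Matrix.mulVec_mulVec, hreg1, Matrix.add_mulVec, Matrix.add_mulVec,
      ← Matrix.mulVec_mulVec, ← Matrix.mulVec_mulVec]
  have key2 : ∀ v : Fin q → ℝ,
      Ce.mulVec (Pmat.mulVec v) = -(De.mulVec (Γ.mulVec v) + Fe.mulVec v) := by
    intro v
    rw [eq_neg_iff_add_eq_zero, Matrix.mulVec_mulVec, Matrix.mulVec_mulVec,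
      ← add_assoc, ← Matrix.add_mulVec, ← Matrix.add_mulVec, ← hreg2, Matrix.zero_mulVec]
  constructor
  · intro t ht
    rw [hu t]
    simp only [Matrix.mulVec_add, Matrix.mulVec_sub, Matrix.add_mulVec,
      ← Matrix.mulVec_mulVec, key2]
    abel
  · intro t ht
    have hP : HasDerivAt (fun τ => Pmat.mulVec (υh τ))
        (Pmat.mulVec (S.mulVec (υh t) + η t)) t :=
      (Matrix.mulVecLin Pmat).toContinuousLinearMap.hasFDerivAt.comp_hasDerivAt t (hυh t ht)
    have hd := (hx t ht).sub hP
    convert hd using 1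
    case e'_4 => rfl
    case e'_5 => rfl
    case e'_6 => rfl
    case e'_8 => rfl
    rw [hu t]
    simp only [Matrix.mulVec_add, Matrix.mulVec_sub, Matrix.add_mulVec,
      ← Matrix.mulVec_mulVec, key]
    abel
end

section
/- Consider a single plant x' = A x + B u + E υ with measured output y = C x + D u + F υ, exosystem υ' = S υ, and regulated error e = C_e x + D_e u + F_e υ, where all matrices are real and of compatible dimensions. Assume there exist Π, Γ with Π S = A Π + B Γ + E and 0 = C_e Π + D_e Γ + F_e. Apply the observer-based controller u = K(x̂ − Π υ̂) + Γ υ̂, x̂' = A x̂ + E υ̂ + B u + L₁(ŷ − y), υ̂' = S υ̂ + L₂(ŷ − y), ŷ = C x̂ + F υ̂ + D u, where the gains satisfy: A + B K is Hurwitz and [[A + L₁ C, E + L₁ F],[L₂ C, S + L₂ F]] is Hurwitz. Then for every differentiable solution (x, υ, x̂, υ̂) of the closed-loop system and arbitrary initial conditions, e(t) → 0 as t → ∞. -/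
open scoped Matrix
open Filter Topology

section AuxODELemmas

open Filter Topology Matrix Polynomial


/-- Scalar linear ODE decay: if `u' = μ • u + g` with `Re μ < 0` and `g → 0`, then `u → 0`. -/
lemma aux_scalar_ode {E : Type*} [NormedAddCommGroup E] [NormedSpace ℂ E]
    (μ : ℂ) (hμ : μ.re < 0) (u g : ℝ → E)
    (hu : ∀ t : ℝ, 0 ≤ t → HasDerivAt u (μ • u t + g t) t)
    (hg : Tendsto g atTop (𝓝 0)) : Tendsto u atTop (𝓝 0) := by
  set α : ℝ := -μ.re with hα
  have hα0 : 0 < α := by simpa [hα] using hμ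
  set w : ℝ → E := fun t => Complex.exp (-μ * t) • u t with hw
  have hwderiv : ∀ t : ℝ, 0 ≤ t → HasDerivAt w (Complex.exp (-μ * t) • g t) t := by
    intro t ht
    have hc : HasDerivAt (fun s : ℝ => Complex.exp (-μ * s)) (-μ * Complex.exp (-μ * t)) t := by
      have h1 : HasDerivAt (fun s : ℝ => (-μ) * (s : ℂ)) (-μ) t := by
        simpa using (Complex.ofRealCLM.hasDerivAt (x := t)).const_mul (-μ)
      simpa [mul_comm] using h1.cexp
    have := hc.smul (hu t ht)
    convert this using 1
    · rfl
    rw [smul_add, smul_smul]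
    module
  have hnorm : ∀ t : ℝ, ‖Complex.exp (-μ * t)‖ = Real.exp (α * t) := by
    intro t
    rw [Complex.norm_exp]
    norm_num [Complex.mul_re, hα]
  have huw : ∀ t : ℝ, ‖u t‖ = Real.exp (-(α * t)) * ‖w t‖ := by
    intro t
    rw [hw]
    simp only [norm_smul, hnorm, ← mul_assoc, ← Real.exp_add]
    simp
  rw [NormedAddCommGroup.tendsto_nhds_zero]
  intro ε hε
  set ε' : ℝ := ε * α / 4 with hε'
  have hε'0 : 0 < ε' := by positivity
  obtain ⟨T₀, hT₀0, hT₀g⟩ : ∃ T₀ : ℝ, 0 ≤ T₀ ∧ ∀ s ≥ T₀, ‖g s‖ ≤ ε' := by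
    have := (NormedAddCommGroup.tendsto_nhds_zero.mp hg) ε' hε'0
    rw [eventually_atTop] at this
    obtain ⟨T, hT⟩ := this
    exact ⟨max T 0, ⟨le_max_right _ _, fun s hs => (hT s ((le_max_left _ _).trans hs)).le⟩⟩
  have hfence : ∀ t ≥ T₀, ‖w t‖ ≤ ‖w T₀‖ + ε' / α * Real.exp (α * t) := by
    intro t ht
    have key := image_norm_le_of_norm_deriv_right_le_deriv_boundary
      (f := w) (f' := fun s => Complex.exp (-μ * s) • g s) (a := T₀) (b := t)
      (B := fun s => ‖w T₀‖ + ε' / α * Real.exp (α * s))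
      (B' := fun s => ε' * Real.exp (α * s)) ?cont ?deriv ?init ?hB ?bound
    · exact key (Set.right_mem_Icc.mpr ht)
    case cont =>
      intro s hs
      exact ((hwderiv s (hT₀0.trans hs.1)).continuousAt).continuousWithinAt
    case deriv =>
      intro s hs
      exact (hwderiv s (hT₀0.trans hs.1)).hasDerivWithinAt
    case init =>
      have : 0 < ε' / α * Real.exp (α * T₀) := by positivity
      linarith
    case hB =>
      intro s
      have h1 : HasDerivAt (fun r : ℝ => α * r) α s := by
        simpa using (hasDerivAt_id s).const_mul α
      have h2 := (h1.exp).const_mul (ε' / α)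
      have h3 := h2.const_add ‖w T₀‖
      convert h3 using 1
      · rfl
      · rfl
      rw [mul_comm (Real.exp (α * s)) α, ← mul_assoc, div_mul_cancel₀ _ hα0.ne']
    case bound =>
      intro s hs
      show ‖Complex.exp (-μ * s) • g s‖ ≤ ε' * Real.exp (α * s)
      rw [norm_smul, hnorm]
      have h1 : ‖g s‖ ≤ ε' := hT₀g s hs.1
      nlinarith [Real.exp_pos (α * s), norm_nonneg (g s)]
  have h1 : Tendsto (fun t : ℝ => Real.exp (-(α * t)) * ‖w T₀‖) atTop (𝓝 (0 * ‖w T₀‖)) := by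
    apply Tendsto.mul_const
    apply Real.tendsto_exp_atBot.comp
    exact tendsto_neg_atTop_atBot.comp (tendsto_id.const_mul_atTop hα0)
  rw [zero_mul] at h1
  have h2 : ∀ᶠ t in atTop, Real.exp (-(α * t)) * ‖w T₀‖ < ε / 2 :=
    h1.eventually_lt_const (by linarith)
  have hε'α : ε' / α = ε / 4 := by
    rw [hε']
    field_simp
  filter_upwards [h2, eventually_ge_atTop T₀] with t ha hb
  have hee : Real.exp (-(α * t)) * (ε' / α * Real.exp (α * t)) = ε' / α := by
    rw [show Real.exp (-(α * t)) * (ε' / α * Real.exp (α * t))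
        = ε' / α * (Real.exp (-(α * t)) * Real.exp (α * t)) by ring, ← Real.exp_add]
    simp
  have hc : ‖u t‖ ≤ Real.exp (-(α * t)) * ‖w T₀‖ + ε' / α := by
    rw [huw t, ← hee, ← mul_add]
    exact mul_le_mul_of_nonneg_left (hfence t hb) (Real.exp_pos _).le
  rw [hε'α] at hc
  linarith


variable {𝕜 : Type*} [RCLike 𝕜]

/-- Applying a matrix (as a continuous linear map) preserves differentiability. -/
lemma aux_hasDerivAt_mulVec {n m : Type*} [Fintype n] [Fintype m] [DecidableEq n]
    (N : Matrix m n 𝕜) {u : ℝ → n → 𝕜} {d : n → 𝕜} {t : ℝ}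
    (h : HasDerivAt u d t) :
    HasDerivAt (fun s => N.mulVec (u s)) (N.mulVec d) t := by
  have hc :=
    ((LinearMap.toContinuousLinearMap N.mulVecLin).restrictScalars ℝ).hasFDerivAt (x := u t)
  exact hc.comp_hasDerivAt t h

lemma aux_tendsto_mulVec {n m : Type*} [Fintype n] [Fintype m] [DecidableEq n]
    (N : Matrix m n 𝕜) {u : ℝ → n → 𝕜}
    (h : Tendsto u atTop (𝓝 0)) :
    Tendsto (fun s => N.mulVec (u s)) atTop (𝓝 0) := by
  have hc : Continuous fun v : n → 𝕜 => N.mulVec v := by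
    exact (LinearMap.toContinuousLinearMap N.mulVecLin).continuous
  have := (hc.tendsto 0).comp h
  rw [Matrix.mulVec_zero] at this
  exact this

/-- List-of-roots induction: if `(∏ (M - μ•1)) u = 0` pointwise, all `Re μ < 0`,
and `u' = M u + g` with `g → 0`, then `u → 0`. -/
lemma aux_list_ode {n : Type*} [Fintype n] [DecidableEq n]
    (L : List ℂ) (M : Matrix n n ℂ) (hL : ∀ μ ∈ L, μ.re < 0)
    (u g : ℝ → n → ℂ)
    (hu : ∀ t : ℝ, 0 ≤ t → HasDerivAt u (M.mulVec (u t) + g t) t)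
    (hg : Tendsto g atTop (𝓝 0))
    (h0 : ∀ t : ℝ, ((L.map fun μ => M - μ • 1).prod).mulVec (u t) = 0) :
    Tendsto u atTop (𝓝 0) := by
  induction L generalizing u g with
  | nil =>
    have : ∀ t : ℝ, u t = 0 := by
      intro t
      simpa using h0 t
    rw [show u = fun _ => (0 : n → ℂ) from funext this]
    exact tendsto_const_nhds
  | cons μ L ih =>
    have hcomm : ∀ ν : ℂ, Commute M (M - ν • 1) :=
      fun ν => (Commute.refl M).sub_right ((Commute.one_right M).smul_right ν)
    have hQcomm : Commute (M - μ • 1) ((L.map fun ν => M - ν • 1).prod) := by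
      apply Commute.list_prod_right
      intro b hb
      obtain ⟨ν, _, rfl⟩ := List.mem_map.mp hb
      exact (hcomm μ).symm.sub_right ((Commute.one_right (M - μ • 1)).smul_right ν)
    set Q : Matrix n n ℂ := (L.map fun ν => M - ν • 1).prod with hQ
    set v : ℝ → n → ℂ := fun t => (M - μ • 1).mulVec (u t) with hv
    have hv0 : Tendsto v atTop (𝓝 0) := by
      apply ih (fun ν hν => hL ν (List.mem_cons_of_mem μ hν)) v
        (fun t => (M - μ • 1).mulVec (g t))
      · intro t ht
        have hd := aux_hasDerivAt_mulVec (M - μ • 1) (hu t ht)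
        convert hd using 1
        simp only [hv]
        rw [Matrix.mulVec_add, Matrix.mulVec_mulVec, Matrix.mulVec_mulVec, (hcomm μ).eq]
      · exact aux_tendsto_mulVec (M - μ • 1) hg
      · intro t
        simp only [hv]
        rw [Matrix.mulVec_mulVec, ← hQcomm.eq, ← Matrix.mulVec_mulVec]
        have h1 := h0 t
        rw [List.map_cons, List.prod_cons] at h1
        rwa [← Matrix.mulVec_mulVec] at h1
    have hμre : μ.re < 0 := hL μ List.mem_cons_self
    apply aux_scalar_ode μ hμre u (fun t => v t + g t)
    · intro t ht
      convert hu t ht using 1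
      · rfl
      · rfl
      · rfl
      have hM : M.mulVec (u t) = μ • u t + v t := by
        simp only [hv]
        rw [Matrix.sub_mulVec, Matrix.smul_mulVec, Matrix.one_mulVec]
        abel
      rw [hM]
      abel
    · simpa using hv0.add hg

/-- A root of the characteristic polynomial of a complex matrix is in the spectrum. -/
lemma aux_root_charpoly_mem_spectrum {n : Type*} [Fintype n] [DecidableEq n]
    (M : Matrix n n ℂ) (μ : ℂ) (h : M.charpoly.IsRoot μ) : μ ∈ spectrum ℂ M := by
  rw [spectrum.mem_iff]
  intro hunit
  have hdet : IsUnit (algebraMap ℂ (Matrix n n ℂ) μ - M).det :=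
    (Matrix.isUnit_iff_isUnit_det _).mp hunit
  have heval : M.charpoly.eval μ = (algebraMap ℂ (Matrix n n ℂ) μ - M).det := by
    rw [Matrix.charpoly, eval_det, Matrix.matPolyEquiv_charmatrix]
    simp [Matrix.scalar]
    congr
  rw [Polynomial.IsRoot, heval] at h
  rw [h] at hdet
  exact (not_isUnit_zero : ¬ IsUnit (0 : ℂ)) hdet

/-- Hurwitz complex matrix ODE: solutions of `u' = M u + g` with `g → 0` tend to zero. -/
lemma aux_matrix_ode_complex {n : Type*} [Fintype n] [DecidableEq n]
    (M : Matrix n n ℂ) (hM : ∀ μ ∈ spectrum ℂ M, μ.re < 0)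
    (u g : ℝ → n → ℂ)
    (hu : ∀ t : ℝ, 0 ≤ t → HasDerivAt u (M.mulVec (u t) + g t) t)
    (hg : Tendsto g atTop (𝓝 0)) : Tendsto u atTop (𝓝 0) := by
  have hmonic : M.charpoly.Monic := M.charpoly_monic
  have hsplit : M.charpoly.Splits := IsAlgClosed.splits _
  set L : List ℂ := M.charpoly.roots.toList with hLdef
  have hprod : M.charpoly = (L.map fun μ => X - C μ).prod := by
    conv_lhs => rw [hsplit.eq_prod_roots_of_monic hmonic,
      ← Multiset.coe_toList M.charpoly.roots]
    rw [Multiset.map_coe, Multiset.prod_coe]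
  apply aux_list_ode L M ?_ u g hu hg
  · intro t
    have hCH : (aeval M) M.charpoly = 0 := Matrix.aeval_self_charpoly M
    have hzero : ((L.map fun μ => M - μ • 1).prod) = 0 := by
      rw [hprod, map_list_prod (aeval M), List.map_map] at hCH
      rw [show ((aeval M : ℂ[X] →ₐ[ℂ] Matrix n n ℂ) ∘ fun μ => X - C μ)
          = fun μ : ℂ => M - μ • 1 from funext fun μ => by
            simp [Algebra.algebraMap_eq_smul_one]] at hCH
      exact hCH
    rw [hzero, Matrix.zero_mulVec]
  · intro μ hμ
    apply hM
    apply aux_root_charpoly_mem_spectrum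
    exact Polynomial.isRoot_of_mem_roots (Multiset.mem_toList.mp hμ)

/-- Hurwitz real matrix ODE: solutions of `w' = M w + f` with `f → 0` tend to zero. -/
lemma aux_matrix_ode_real {n : Type*} [Fintype n] [DecidableEq n]
    (M : Matrix n n ℝ) (hM : ∀ μ ∈ spectrum ℂ (M.map (fun v : ℝ => (v : ℂ))), μ.re < 0)
    (w f : ℝ → n → ℝ)
    (hw : ∀ t : ℝ, 0 ≤ t → HasDerivAt w (M.mulVec (w t) + f t) t)
    (hf : Tendsto f atTop (𝓝 0)) : Tendsto w atTop (𝓝 0) := by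
  set Mc : Matrix n n ℂ := M.map (fun v : ℝ => (v : ℂ)) with hMc
  set u : ℝ → n → ℂ := fun t i => ((w t i : ℝ) : ℂ) with hu
  set g : ℝ → n → ℂ := fun t i => ((f t i : ℝ) : ℂ) with hg
  have hcast : ∀ (v : n → ℝ), Mc.mulVec (fun i => ((v i : ℝ) : ℂ)) =
      fun i => ((M.mulVec v i : ℝ) : ℂ) := by
    intro v
    funext i
    simp [hMc, Matrix.mulVec, dotProduct, Matrix.map_apply]
  have hu' : ∀ t : ℝ, 0 ≤ t → HasDerivAt u (Mc.mulVec (u t) + g t) t := by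
    intro t ht
    rw [hasDerivAt_pi]
    intro i
    have hcomp := (hasDerivAt_pi.mp (hw t ht)) i
    have := Complex.ofRealCLM.hasFDerivAt.comp_hasDerivAt t hcomp
    simp only [hu]
    convert this using 1
    · rfl
    have := congrFun (hcast (w t)) i
    simp only [Pi.add_apply, this]
    simp [hg]
  have hg' : Tendsto g atTop (𝓝 0) := by
    rw [tendsto_pi_nhds]
    intro i
    have h1 : Tendsto (fun t => f t i) atTop (𝓝 0) := by
      have := tendsto_pi_nhds.mp hf i
      simpa using this
    have := (Complex.continuous_ofReal.tendsto 0).comp h1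
    exact this
  have hu0 : Tendsto u atTop (𝓝 0) := aux_matrix_ode_complex Mc hM u g hu' hg'
  rw [tendsto_pi_nhds]
  intro i
  have h1 : Tendsto (fun t => u t i) atTop (𝓝 0) := by
    have := tendsto_pi_nhds.mp hu0 i
    simpa using this
  have h2 := (Complex.continuous_re.tendsto 0).comp h1
  simp only [Complex.zero_re] at h2
  convert h2 using 1
  · rfl
  · rfl

lemma aux_hasDerivAt_sumElim {a b : Type*} [Fintype a] [Fintype b] {f : ℝ → a → ℝ} {g : ℝ → b → ℝ}
    {f' : a → ℝ} {g' : b → ℝ} {t : ℝ}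
    (hf : HasDerivAt f f' t) (hg : HasDerivAt g g' t) :
    HasDerivAt (fun s => Sum.elim (f s) (g s)) (Sum.elim f' g') t := by
  rw [hasDerivAt_pi]
  rintro (i | i)
  · simpa using hasDerivAt_pi.mp hf i
  · simpa using hasDerivAt_pi.mp hg i


end AuxODELemmas

/-- classical observer-based output regulation for a single linear plant with
exosystem `υ' = S υ`: under the regulator equations and Hurwitz gain conditions, the regulated
error `e = Cₑ x + Dₑ u + Fₑ υ` converges to zero for every solution. -/
theorem single_plant_output_regulation
    {Nx Nu q r pe : ℕ}
    (A : Matrix (Fin Nx) (Fin Nx) ℝ) (B : Matrix (Fin Nx) (Fin Nu) ℝ)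
    (C : Matrix (Fin r) (Fin Nx) ℝ) (D : Matrix (Fin r) (Fin Nu) ℝ)
    (E : Matrix (Fin Nx) (Fin q) ℝ) (F : Matrix (Fin r) (Fin q) ℝ)
    (S : Matrix (Fin q) (Fin q) ℝ)
    (Ce : Matrix (Fin pe) (Fin Nx) ℝ) (De : Matrix (Fin pe) (Fin Nu) ℝ)
    (Fe : Matrix (Fin pe) (Fin q) ℝ)
    (Pmat : Matrix (Fin Nx) (Fin q) ℝ) (Γ : Matrix (Fin Nu) (Fin q) ℝ)
    (K : Matrix (Fin Nu) (Fin Nx) ℝ)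
    (L₁ : Matrix (Fin Nx) (Fin r) ℝ) (L₂ : Matrix (Fin q) (Fin r) ℝ)
    (hreg1 : Pmat * S = A * Pmat + B * Γ + E)
    (hreg2 : 0 = Ce * Pmat + De * Γ + Fe)
    (hK : ∀ μ ∈ spectrum ℂ ((A + B * K).map (fun v : ℝ => (v : ℂ))), μ.re < 0)
    (hL : ∀ μ ∈ spectrum ℂ ((Matrix.fromBlocks (A + L₁ * C) (E + L₁ * F)
        (L₂ * C) (S + L₂ * F)).map (fun v : ℝ => (v : ℂ))), μ.re < 0)
    (x xh : ℝ → Fin Nx → ℝ) (υ υh : ℝ → Fin q → ℝ)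
    (u : ℝ → Fin Nu → ℝ) (y yh : ℝ → Fin r → ℝ)
    (hu : ∀ t : ℝ, u t = K.mulVec (xh t - Pmat.mulVec (υh t)) + Γ.mulVec (υh t))
    (hy : ∀ t : ℝ, y t = C.mulVec (x t) + D.mulVec (u t) + F.mulVec (υ t))
    (hyh : ∀ t : ℝ, yh t = C.mulVec (xh t) + F.mulVec (υh t) + D.mulVec (u t))
    (hυ : ∀ t : ℝ, 0 ≤ t → HasDerivAt υ (S.mulVec (υ t)) t)
    (hx : ∀ t : ℝ, 0 ≤ t →
      HasDerivAt x (A.mulVec (x t) + B.mulVec (u t) + E.mulVec (υ t)) t)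
    (hxh : ∀ t : ℝ, 0 ≤ t →
      HasDerivAt xh (A.mulVec (xh t) + E.mulVec (υh t) + B.mulVec (u t)
        + L₁.mulVec (yh t - y t)) t)
    (hυh : ∀ t : ℝ, 0 ≤ t →
      HasDerivAt υh (S.mulVec (υh t) + L₂.mulVec (yh t - y t)) t) :
    Tendsto (fun t : ℝ => Ce.mulVec (x t) + De.mulVec (u t) + Fe.mulVec (υ t))
      atTop (nhds 0) := by
  set ex : ℝ → Fin Nx → ℝ := fun s => xh s - x s with hex_def
  set ev : ℝ → Fin q → ℝ := fun s => υh s - υ s with hev_def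
  have key : ∀ t : ℝ, yh t - y t = C.mulVec (ex t) + F.mulVec (ev t) := by
    intro t
    rw [hyh t, hy t]
    simp only [hex_def, hev_def]
    rw [Matrix.mulVec_sub, Matrix.mulVec_sub]
    abel
  have hexd : ∀ t : ℝ, 0 ≤ t →
      HasDerivAt ex ((A + L₁ * C).mulVec (ex t) + (E + L₁ * F).mulVec (ev t)) t := by
    intro t ht
    have h := (hxh t ht).sub (hx t ht)
    convert h using 1
    · rfl
    · rfl
    · rfl
    · rfl
    rw [key t]
    simp only [hex_def, hev_def]
    simp only [Matrix.add_mulVec, Matrix.mulVec_sub, Matrix.mulVec_add,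
      ← Matrix.mulVec_mulVec]
    abel
  have hevd : ∀ t : ℝ, 0 ≤ t →
      HasDerivAt ev ((L₂ * C).mulVec (ex t) + (S + L₂ * F).mulVec (ev t)) t := by
    intro t ht
    have h := (hυh t ht).sub (hυ t ht)
    convert h using 1
    · rfl
    · rfl
    · rfl
    · rfl
    rw [key t]
    simp only [hex_def, hev_def]
    simp only [Matrix.add_mulVec, Matrix.mulVec_sub, Matrix.mulVec_add,
      ← Matrix.mulVec_mulVec]
    abel
  set W : ℝ → (Fin Nx ⊕ Fin q) → ℝ := fun s => Sum.elim (ex s) (ev s) with hW_def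
  set Mblk : Matrix (Fin Nx ⊕ Fin q) (Fin Nx ⊕ Fin q) ℝ :=
    Matrix.fromBlocks (A + L₁ * C) (E + L₁ * F) (L₂ * C) (S + L₂ * F) with hMblk_def
  have hWd : ∀ t : ℝ, 0 ≤ t →
      HasDerivAt W (Mblk.mulVec (W t) + (fun _ => (0 : (Fin Nx ⊕ Fin q) → ℝ)) t) t := by
    intro t ht
    have h := aux_hasDerivAt_sumElim (hexd t ht) (hevd t ht)
    convert h using 1
    rw [add_zero, hMblk_def, Matrix.fromBlocks_mulVec]
    simp only [hW_def, Sum.elim_comp_inl, Sum.elim_comp_inr]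
  have hW0 : Tendsto W atTop (𝓝 0) :=
    aux_matrix_ode_real Mblk hL W (fun _ => 0) hWd tendsto_const_nhds
  have hex0 : Tendsto ex atTop (𝓝 0) := by
    rw [tendsto_pi_nhds]
    intro i
    have := tendsto_pi_nhds.mp hW0 (Sum.inl i)
    simpa [hW_def] using this
  have hev0 : Tendsto ev atTop (𝓝 0) := by
    rw [tendsto_pi_nhds]
    intro i
    have := tendsto_pi_nhds.mp hW0 (Sum.inr i)
    simpa [hW_def] using this
  set z : ℝ → Fin Nx → ℝ := fun s => x s - Pmat.mulVec (υ s) with hz_def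
  set f₂ : ℝ → Fin Nx → ℝ :=
    fun s => (B * K).mulVec (ex s) + (B * Γ - B * (K * Pmat)).mulVec (ev s) with hf₂_def
  have hzd : ∀ t : ℝ, 0 ≤ t → HasDerivAt z ((A + B * K).mulVec (z t) + f₂ t) t := by
    intro t ht
    have h := (hx t ht).sub (aux_hasDerivAt_mulVec Pmat (hυ t ht))
    convert h using 1
    · rfl
    · rfl
    · rfl
    · rfl
    rw [Matrix.mulVec_mulVec, hreg1, hu t]
    simp only [hz_def, hf₂_def, hex_def, hev_def]
    simp only [Matrix.add_mulVec, Matrix.sub_mulVec, Matrix.mulVec_add, Matrix.mulVec_sub,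
      ← Matrix.mulVec_mulVec]
    abel
  have hf₂0 : Tendsto f₂ atTop (𝓝 0) := by
    have := (aux_tendsto_mulVec (B * K) hex0).add
      (aux_tendsto_mulVec (B * Γ - B * (K * Pmat)) hev0)
    simpa [hf₂_def] using this
  have hz0 : Tendsto z atTop (𝓝 0) := aux_matrix_ode_real (A + B * K) hK z f₂ hzd hf₂0
  have hfe : Fe = -(Ce * Pmat + De * Γ) := by
    rw [← add_eq_zero_iff_eq_neg, add_comm]
    exact hreg2.symm
  have hiden : ∀ t : ℝ, Ce.mulVec (x t) + De.mulVec (u t) + Fe.mulVec (υ t)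
      = (Ce + De * K).mulVec (z t) +
        ((De * K).mulVec (ex t) + (De * Γ - De * (K * Pmat)).mulVec (ev t)) := by
    intro t
    rw [hu t, hfe]
    simp only [hz_def, hex_def, hev_def]
    simp only [Matrix.add_mulVec, Matrix.sub_mulVec, Matrix.neg_mulVec, Matrix.mulVec_add,
      Matrix.mulVec_sub, ← Matrix.mulVec_mulVec]
    abel
  have hconv := (aux_tendsto_mulVec (Ce + De * K) hz0).add
    ((aux_tendsto_mulVec (De * K) hex0).add
      (aux_tendsto_mulVec (De * Γ - De * (K * Pmat)) hev0))
  rw [add_zero, add_zero] at hconv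
  exact hconv.congr (fun t => (hiden t).symm)
end
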